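/- Let m ≥ 1, C₀ > 0, 0 ≤ δ ≤ π, and let Q_1, Q̃_1 : [0,π] → ℂ^{m×m} be integrable with Q_1(x)† = −Q_1(x), Q̃_1(x)† = −Q̃_1(x), ‖Q_1(x)‖ ≤ C₀ and ‖Q̃_1(x)‖ ≤ C₀ (operator norm) for a.e. x ∈ [0,π], and Q_1(x) = Q̃_1(x) for a.e. x ∈ [0,δ]. Let P_± and P̃_± be the absolutely continuous solutions of P_±′ = ±Q_1P_±, P̃_±′ = ±Q̃_1P̃_±, with P_±(0) = P̃_±(0) = I, and set Ω(x) := (1/2)(P_−(x)P̃_−(x)† + P_+(x)P̃_+(x)†). Then Ω(x) = I for x ∈ [0,δ], and ‖Ω(x) − I‖ ≤ 2C₀(x − δ) for all x ∈ [δ,π] (operator norm). -/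

import Mathlib

open Matrix MeasureTheory Set
open scoped Matrix.Norms.L2Operator

noncomputable section OmegaHelpers

set_option linter.unusedSectionVars false

namespace OmegaAux

section Generic
variable {E : Type*} [NormedRing E] [NormedAlgebra ℝ E] [CompleteSpace E]

lemma fubini_mul_integral {x : ℝ} {u v : ℝ → E}
    (hu : IntegrableOn u (Ioc 0 x)) (hv : IntegrableOn v (Ioc 0 x)) :
    (∫ s in Ioc (0:ℝ) x, u s * (∫ t in Ioc (0:ℝ) s, v t))
      + (∫ s in Ioc (0:ℝ) x, (∫ t in Ioc (0:ℝ) s, u t) * v s)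
      = (∫ s in Ioc (0:ℝ) x, u s) * (∫ s in Ioc (0:ℝ) x, v s) := by
  classical
  set μ := volume.restrict (Ioc (0:ℝ) x) with hμ
  set K : ℝ × ℝ → E := fun p => u p.1 * v p.2 with hK
  have hKm : AEStronglyMeasurable K (μ.prod μ) :=
    (hu.1.comp_fst (ν := μ)).mul (hv.1.comp_snd (μ := μ))
  have hKint : Integrable K (μ.prod μ) := by
    refine (hu.norm.mul_prod hv.norm).mono' hKm ?_
    filter_upwards with p
    simpa using norm_mul_le (u p.1) (v p.2)
  have hS : MeasurableSet {p : ℝ × ℝ | p.2 ≤ p.1} :=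
    measurableSet_le measurable_snd measurable_fst
  have h1 : (∫ p, ({p : ℝ × ℝ | p.2 ≤ p.1}).indicator K p ∂(μ.prod μ))
      = ∫ s in Ioc (0:ℝ) x, u s * (∫ t in Ioc (0:ℝ) s, v t) := by
    rw [integral_prod _ (hKint.indicator hS)]
    refine setIntegral_congr_fun measurableSet_Ioc (fun s hs => ?_)
    have hfun : (fun t => ({p : ℝ × ℝ | p.2 ≤ p.1}).indicator K (s, t))
        = (Iic s).indicator (fun t => u s * v t) := by
      ext t; by_cases h : t ≤ s <;> simp [Set.indicator_apply, h, hK]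
    rw [hfun, integral_indicator measurableSet_Iic, hμ,
      Measure.restrict_restrict measurableSet_Iic]
    have hset : Iic s ∩ Ioc 0 x = Ioc 0 s := by
      rw [Set.inter_comm, Ioc_inter_Iic, min_eq_right hs.2]
    rw [hset]
    simpa using
      ((ContinuousLinearMap.mul ℝ E (u s)).integral_comp_comm
        (hv.mono_set (Ioc_subset_Ioc_right hs.2)))
  have h2 : (∫ p, ({p : ℝ × ℝ | p.2 ≤ p.1})ᶜ.indicator K p ∂(μ.prod μ))
      = ∫ s in Ioc (0:ℝ) x, (∫ t in Ioc (0:ℝ) s, u t) * v s := by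
    rw [integral_prod_symm _ (hKint.indicator hS.compl)]
    refine setIntegral_congr_fun measurableSet_Ioc (fun t ht => ?_)
    have hfun : (fun s => ({p : ℝ × ℝ | p.2 ≤ p.1})ᶜ.indicator K (s, t))
        = (Iio t).indicator (fun s => u s * v t) := by
      ext s; by_cases h : s < t <;>
        simp [Set.indicator_apply, h, not_lt.mp, hK, not_le.mpr]
    rw [hfun, integral_indicator measurableSet_Iio, hμ,
      Measure.restrict_restrict measurableSet_Iio]
    have hset : Iio t ∩ Ioc 0 x = Ioo 0 t := by
      ext s
      simp only [mem_inter_iff, mem_Iio, mem_Ioc, mem_Ioo]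
      exact ⟨fun h => ⟨h.2.1, h.1⟩, fun h => ⟨h.2, h.1, le_trans h.2.le ht.2⟩⟩
    rw [hset, ← integral_Ioc_eq_integral_Ioo]
    simpa using
      (((ContinuousLinearMap.mul ℝ E).flip (v t)).integral_comp_comm
        (hu.mono_set (Ioc_subset_Ioc_right ht.2)))
  have h3 : (∫ p, K p ∂(μ.prod μ))
      = (∫ s in Ioc (0:ℝ) x, u s) * (∫ s in Ioc (0:ℝ) x, v s) := by
    rw [integral_prod _ hKint]
    have : ∀ s, (∫ t, K (s, t) ∂μ) = u s * (∫ t in Ioc (0:ℝ) x, v t) := fun s => by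
      simpa using ((ContinuousLinearMap.mul ℝ E (u s)).integral_comp_comm hv)
    simp_rw [this]
    simpa using
      (((ContinuousLinearMap.mul ℝ E).flip (∫ t in Ioc (0:ℝ) x, v t)).integral_comp_comm hu)
  calc (∫ s in Ioc (0:ℝ) x, u s * (∫ t in Ioc (0:ℝ) s, v t))
      + (∫ s in Ioc (0:ℝ) x, (∫ t in Ioc (0:ℝ) s, u t) * v s)
      = (∫ p, ({p : ℝ × ℝ | p.2 ≤ p.1}).indicator K p ∂(μ.prod μ))
        + (∫ p, ({p : ℝ × ℝ | p.2 ≤ p.1})ᶜ.indicator K p ∂(μ.prod μ)) := by rw [h1, h2]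
    _ = ∫ p, (({p : ℝ × ℝ | p.2 ≤ p.1}).indicator K p
          + ({p : ℝ × ℝ | p.2 ≤ p.1})ᶜ.indicator K p) ∂(μ.prod μ) :=
        (integral_add (hKint.indicator hS) (hKint.indicator hS.compl)).symm
    _ = ∫ p, K p ∂(μ.prod μ) := by
        congr 1; ext p
        exact congrFun (Set.indicator_self_add_compl {p : ℝ × ℝ | p.2 ≤ p.1} K) p
    _ = _ := h3

lemma integrableOn_mul_of_bound {s : Set ℝ} {u F : ℝ → E} {C : ℝ}
    (hs : MeasurableSet s)
    (hu : IntegrableOn u s) (hF : AEStronglyMeasurable F (volume.restrict s))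
    (hbd : ∀ t ∈ s, ‖F t‖ ≤ C) :
    IntegrableOn (fun t => u t * F t) s := by
  refine (hu.norm.mul_const C).mono' (hu.1.mul hF) ?_
  filter_upwards [ae_restrict_mem hs] with t ht
  calc ‖u t * F t‖ ≤ ‖u t‖ * ‖F t‖ := norm_mul_le _ _
    _ ≤ ‖u t‖ * C := mul_le_mul_of_nonneg_left (hbd t ht) (norm_nonneg _)

lemma integrableOn_mul_of_bound' {s : Set ℝ} {u F : ℝ → E} {C : ℝ}
    (hs : MeasurableSet s)
    (hu : IntegrableOn u s) (hF : AEStronglyMeasurable F (volume.restrict s))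
    (hbd : ∀ t ∈ s, ‖F t‖ ≤ C) :
    IntegrableOn (fun t => F t * u t) s := by
  refine (hu.norm.mul_const C).mono' (hF.mul hu.1) ?_
  filter_upwards [ae_restrict_mem hs] with t ht
  calc ‖F t * u t‖ ≤ ‖F t‖ * ‖u t‖ := norm_mul_le _ _
    _ ≤ ‖u t‖ * C := by
        rw [mul_comm]
        exact mul_le_mul_of_nonneg_left (hbd t ht) (norm_nonneg _)

lemma integrableOn_mul_cont {c : ℝ} {u F : ℝ → E}
    (hu : IntegrableOn u (Icc 0 c)) (hF : ContinuousOn F (Icc 0 c)) :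
    IntegrableOn (fun t => u t * F t) (Icc 0 c) := by
  obtain ⟨C, hC⟩ := isCompact_Icc.exists_bound_of_continuousOn hF
  exact integrableOn_mul_of_bound measurableSet_Icc hu
    (hF.aestronglyMeasurable measurableSet_Icc) hC

lemma integrableOn_cont_mul {c : ℝ} {u F : ℝ → E}
    (hu : IntegrableOn u (Icc 0 c)) (hF : ContinuousOn F (Icc 0 c)) :
    IntegrableOn (fun t => F t * u t) (Icc 0 c) := by
  obtain ⟨C, hC⟩ := isCompact_Icc.exists_bound_of_continuousOn hF
  exact integrableOn_mul_of_bound' measurableSet_Icc hu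
    (hF.aestronglyMeasurable measurableSet_Icc) hC

/-- Product rule for Volterra-type integral equations. -/
lemma volterra_mul {c : ℝ} {u v f g : ℝ → E} {a b : E}
    (hu : IntegrableOn u (Icc 0 c)) (hv : IntegrableOn v (Icc 0 c))
    (hf : ∀ x ∈ Icc (0:ℝ) c, f x = a + ∫ t in Ioc (0:ℝ) x, u t)
    (hg : ∀ x ∈ Icc (0:ℝ) c, g x = b + ∫ t in Ioc (0:ℝ) x, v t)
    {x : ℝ} (hx : x ∈ Icc (0:ℝ) c) :
    f x * g x = a * b + ∫ s in Ioc (0:ℝ) x, (u s * g s + f s * v s) := by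
  have hsub : Ioc (0:ℝ) x ⊆ Icc 0 c := fun t ht => ⟨ht.1.le, ht.2.trans hx.2⟩
  have hsubI : ∀ s ∈ Ioc (0:ℝ) x, Ioc (0:ℝ) s ⊆ Ioc (0:ℝ) x :=
    fun s hs => Ioc_subset_Ioc_right hs.2
  have hux : IntegrableOn u (Ioc 0 x) := hu.mono_set hsub
  have hvx : IntegrableOn v (Ioc 0 x) := hv.mono_set hsub
  set F : ℝ → E := fun s => ∫ t in Ioc (0:ℝ) s, v t with hF
  set G : ℝ → E := fun s => ∫ t in Ioc (0:ℝ) s, u t with hG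
  have hFc : ContinuousOn F (Icc 0 c) := intervalIntegral.continuousOn_primitive hv
  have hGc : ContinuousOn G (Icc 0 c) := intervalIntegral.continuousOn_primitive hu
  have hFm : AEStronglyMeasurable F (volume.restrict (Ioc 0 x)) :=
    ((hFc.mono hsub).aestronglyMeasurable measurableSet_Ioc)
  have hGm : AEStronglyMeasurable G (volume.restrict (Ioc 0 x)) :=
    ((hGc.mono hsub).aestronglyMeasurable measurableSet_Ioc)
  have hFbd : ∀ s ∈ Ioc (0:ℝ) x, ‖F s‖ ≤ ∫ t in Ioc (0:ℝ) x, ‖v t‖ := by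
    intro s hs
    calc ‖F s‖ ≤ ∫ t in Ioc (0:ℝ) s, ‖v t‖ := norm_integral_le_integral_norm _
      _ ≤ ∫ t in Ioc (0:ℝ) x, ‖v t‖ := by
          refine setIntegral_mono_set hvx.norm ?_ ?_
          · filter_upwards with t using norm_nonneg _
          · exact HasSubset.Subset.eventuallyLE (hsubI s hs)
  have hGbd : ∀ s ∈ Ioc (0:ℝ) x, ‖G s‖ ≤ ∫ t in Ioc (0:ℝ) x, ‖u t‖ := by
    intro s hs
    calc ‖G s‖ ≤ ∫ t in Ioc (0:ℝ) s, ‖u t‖ := norm_integral_le_integral_norm _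
      _ ≤ ∫ t in Ioc (0:ℝ) x, ‖u t‖ := by
          refine setIntegral_mono_set hux.norm ?_ ?_
          · filter_upwards with t using norm_nonneg _
          · exact HasSubset.Subset.eventuallyLE (hsubI s hs)
  have hiuF : IntegrableOn (fun s => u s * F s) (Ioc 0 x) :=
    integrableOn_mul_of_bound measurableSet_Ioc hux hFm hFbd
  have hiGv : IntegrableOn (fun s => G s * v s) (Ioc 0 x) :=
    integrableOn_mul_of_bound' measurableSet_Ioc hvx hGm hGbd
  have hiub : IntegrableOn (fun s => u s * b) (Ioc 0 x) :=
    ((ContinuousLinearMap.mul ℝ E).flip b).integrable_comp hux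
  have hiav : IntegrableOn (fun s => a * v s) (Ioc 0 x) :=
    (ContinuousLinearMap.mul ℝ E a).integrable_comp hvx
  have key : (∫ s in Ioc (0:ℝ) x, (u s * g s + f s * v s))
      = (∫ s in Ioc (0:ℝ) x, (u s * b + u s * F s) + (a * v s + G s * v s)) := by
    refine setIntegral_congr_fun measurableSet_Ioc (fun s hs => ?_)
    rw [hg s (hsub hs), hf s (hsub hs)]
    simp only [mul_add, add_mul]
    rfl
  have i12 : IntegrableOn (fun s => u s * b + u s * F s) (Ioc 0 x) := hiub.add hiuF
  have i34 : IntegrableOn (fun s => a * v s + G s * v s) (Ioc 0 x) := hiav.add hiGv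
  rw [hf x hx, hg x hx, key]
  rw [integral_add i12 i34, integral_add hiub hiuF, integral_add hiav hiGv]
  have e1 : (∫ s in Ioc (0:ℝ) x, u s * b) = (∫ s in Ioc (0:ℝ) x, u s) * b := by
    simpa using (((ContinuousLinearMap.mul ℝ E).flip b).integral_comp_comm hux)
  have e2 : (∫ s in Ioc (0:ℝ) x, a * v s) = a * (∫ s in Ioc (0:ℝ) x, v s) := by
    simpa using ((ContinuousLinearMap.mul ℝ E a).integral_comp_comm hvx)
  have e3 := fubini_mul_integral hux hvx
  rw [e1, e2]
  rw [add_mul, mul_add, mul_add]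
  rw [show (∫ s in Ioc (0:ℝ) x, u s * F s)
      = ∫ s in Ioc (0:ℝ) x, u s * (∫ t in Ioc (0:ℝ) s, v t) from rfl,
    show (∫ s in Ioc (0:ℝ) x, G s * v s)
      = ∫ s in Ioc (0:ℝ) x, (∫ t in Ioc (0:ℝ) s, u t) * v s from rfl] at *
  rw [← e3]
  abel

/-- Gronwall-type uniqueness for homogeneous Volterra equations. -/
lemma volterra_zero {c K : ℝ} (hK : 0 ≤ K) {w r : ℝ → E}
    (hwc : ContinuousOn w (Icc 0 c))
    (hr : IntegrableOn r (Icc 0 c))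
    (hw : ∀ x ∈ Icc (0:ℝ) c, w x = ∫ t in Ioc (0:ℝ) x, r t)
    (hbd : ∀ᵐ t ∂(volume.restrict (Icc 0 c)), ‖r t‖ ≤ K * ‖w t‖) :
    ∀ x ∈ Icc (0:ℝ) c, w x = 0 := by
  intro x hx
  have hc : (0:ℝ) ≤ c := le_trans hx.1 hx.2
  set ρ : ℝ → ℝ := fun t => ‖w (max 0 (min t c))‖ with hρ
  have hclamp : ∀ t, max 0 (min t c) ∈ Icc (0:ℝ) c :=
    fun t => ⟨le_max_left _ _, max_le hc (min_le_right _ _)⟩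
  have hρc : Continuous ρ := by
    have hcl : Continuous fun t : ℝ => max 0 (min t c) :=
      continuous_const.max (continuous_id.min continuous_const)
    exact (hwc.comp_continuous hcl hclamp).norm
  have hρeq : ∀ t ∈ Icc (0:ℝ) c, ρ t = ‖w t‖ := by
    intro t ht
    rw [hρ]
    simp only []
    rw [min_eq_left ht.2, max_eq_right ht.1]
  set h : ℝ → ℝ := fun y => ∫ t in (0:ℝ)..y, ρ t with hh
  have hderiv : ∀ y, HasDerivAt h (ρ y) y := fun y =>
    intervalIntegral.integral_hasDerivAt_right (hρc.intervalIntegrable _ _)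
      (hρc.stronglyMeasurableAtFilter _ _) hρc.continuousAt
  have hwnormint : IntegrableOn (fun t => ‖w t‖) (Icc 0 c) := hwc.norm.integrableOn_Icc
  have hhval : ∀ y ∈ Icc (0:ℝ) c, h y = ∫ t in Ioc (0:ℝ) y, ‖w t‖ := by
    intro y hy
    rw [hh]
    simp only []
    rw [intervalIntegral.integral_of_le hy.1]
    exact setIntegral_congr_fun measurableSet_Ioc
      (fun t ht => hρeq t ⟨ht.1.le, ht.2.trans hy.2⟩)
  have key : ∀ y ∈ Icc (0:ℝ) c, ‖w y‖ ≤ K * h y := by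
    intro y hy
    have hsub : Ioc (0:ℝ) y ⊆ Icc 0 c := fun t ht => ⟨ht.1.le, ht.2.trans hy.2⟩
    have h1 : ‖w y‖ ≤ ∫ t in Ioc (0:ℝ) y, ‖r t‖ := by
      rw [hw y hy]; exact norm_integral_le_integral_norm _
    have h2 : (∫ t in Ioc (0:ℝ) y, ‖r t‖) ≤ ∫ t in Ioc (0:ℝ) y, K * ‖w t‖ := by
      refine integral_mono_ae ((hr.mono_set hsub).norm)
        ((hwnormint.mono_set hsub).const_mul K) ?_
      exact ae_restrict_of_ae_restrict_of_subset hsub hbd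
    have h3 : (∫ t in Ioc (0:ℝ) y, K * ‖w t‖) = K * ∫ t in Ioc (0:ℝ) y, ‖w t‖ :=
      integral_const_mul K _
    rw [← hhval y hy] at h3
    linarith [h1, h2, h3.le, h3.ge]
  have hcont : ContinuousOn h (Icc 0 c) :=
    (continuous_iff_continuousAt.mpr fun y => (hderiv y).continuousAt).continuousOn
  have hgron := norm_le_gronwallBound_of_norm_deriv_right_le (f := h) (f' := ρ)
    (δ := 0) (K := K) (ε := 0) (a := 0) (b := c) hcont
    (fun y _ => (hderiv y).hasDerivWithinAt) (by simp [hh]) ?_ x hx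
  · have h0 : gronwallBound 0 K 0 (x - 0) = 0 := by
      rw [gronwallBound_ε0]; ring
    rw [h0] at hgron
    have hx0 : h x = 0 := le_antisymm (le_trans (le_abs_self _) hgron) ?hnn
    case hnn =>
      rw [hhval x hx]
      exact setIntegral_nonneg measurableSet_Ioc fun t _ => norm_nonneg _
    have := key x hx
    rw [hx0, mul_zero] at this
    exact norm_le_zero_iff.mp this
  · intro y hy
    have hy' : y ∈ Icc (0:ℝ) c := ⟨hy.1, hy.2.le⟩
    have hnn : 0 ≤ h y := by
      rw [hhval y hy']
      exact setIntegral_nonneg measurableSet_Ioc fun t _ => norm_nonneg _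
    calc ‖ρ y‖ = ‖w y‖ := by
          rw [Real.norm_of_nonneg (norm_nonneg _)]; exact hρeq y hy'
      _ ≤ K * h y := key y hy'
      _ = K * ‖h y‖ + 0 := by rw [Real.norm_of_nonneg hnn, add_zero]

end Generic

section MatrixPart
variable {m : ℕ}

local notation "𝕄" => Matrix (Fin m) (Fin m) ℂ

def ctL (m : ℕ) : Matrix (Fin m) (Fin m) ℂ →L[ℝ] Matrix (Fin m) (Fin m) ℂ :=
  LinearMap.toContinuousLinearMap
    { toFun := fun A => Aᴴ
      map_add' := fun A B => conjTranspose_add A B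
      map_smul' := fun r A => by
        ext i j
        simp [conjTranspose_apply] }

lemma ctL_apply (A : 𝕄) : ctL m A = Aᴴ := rfl

lemma integral_conjTranspose {s : Set ℝ} {f : ℝ → 𝕄} (hf : IntegrableOn f s) :
    (∫ t in s, f t)ᴴ = ∫ t in s, (f t)ᴴ := by
  rw [← ctL_apply]
  exact ((ctL m).integral_comp_comm hf).symm

lemma cont_conjTranspose {s : Set ℝ} {f : ℝ → 𝕄} (hf : ContinuousOn f s) :
    ContinuousOn (fun t => (f t)ᴴ) s :=
  (ctL m).continuous.comp_continuousOn hf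

/-- conjugate transpose of the Volterra equation. -/
lemma conj_volterra {c : ℝ} {Q P : ℝ → 𝕄}
    (hQP : IntegrableOn (fun t => Q t * P t) (Icc 0 c))
    (hP : ∀ x ∈ Icc (0:ℝ) c, P x = 1 + ∫ t in Ioc (0:ℝ) x, Q t * P t) :
    ∀ x ∈ Icc (0:ℝ) c, (P x)ᴴ = 1 + ∫ t in Ioc (0:ℝ) x, (P t)ᴴ * (Q t)ᴴ := by
  intro x hx
  have hsub : Ioc (0:ℝ) x ⊆ Icc 0 c := fun t ht => ⟨ht.1.le, ht.2.trans hx.2⟩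
  rw [hP x hx, conjTranspose_add, conjTranspose_one,
    integral_conjTranspose (hQP.mono_set hsub)]
  congr 1
  exact setIntegral_congr_fun measurableSet_Ioc fun t _ => conjTranspose_mul _ _

/-- Uniqueness of solutions of the Volterra equation. -/
lemma volterra_unique {c C : ℝ} (hC : 0 ≤ C) {Q P1 P2 : ℝ → 𝕄}
    (hQ : IntegrableOn Q (Icc 0 c))
    (hQbd : ∀ᵐ t ∂(volume.restrict (Icc 0 c)), ‖Q t‖ ≤ C)
    (hP1c : ContinuousOn P1 (Icc 0 c)) (hP2c : ContinuousOn P2 (Icc 0 c))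
    (hP1 : ∀ x ∈ Icc (0:ℝ) c, P1 x = 1 + ∫ t in Ioc (0:ℝ) x, Q t * P1 t)
    (hP2 : ∀ x ∈ Icc (0:ℝ) c, P2 x = 1 + ∫ t in Ioc (0:ℝ) x, Q t * P2 t) :
    ∀ x ∈ Icc (0:ℝ) c, P1 x = P2 x := by
  have hwc : ContinuousOn (fun t => P1 t - P2 t) (Icc 0 c) := hP1c.sub hP2c
  have hrint : IntegrableOn (fun t => Q t * (P1 t - P2 t)) (Icc 0 c) :=
    integrableOn_mul_cont hQ hwc
  have hw : ∀ x ∈ Icc (0:ℝ) c,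
      (fun t => P1 t - P2 t) x = ∫ t in Ioc (0:ℝ) x, Q t * (P1 t - P2 t) := by
    intro x hx
    have hsub : Ioc (0:ℝ) x ⊆ Icc 0 c := fun t ht => ⟨ht.1.le, ht.2.trans hx.2⟩
    have h1 : P1 x - P2 x = ∫ t in Ioc (0:ℝ) x, (Q t * P1 t - Q t * P2 t) := by
      rw [hP1 x hx, hP2 x hx,
        integral_sub ((integrableOn_mul_cont hQ hP1c).mono_set hsub)
          ((integrableOn_mul_cont hQ hP2c).mono_set hsub)]
      abel
    simp only []
    rw [h1]
    exact setIntegral_congr_fun measurableSet_Ioc fun t _ => by rw [mul_sub]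
  have hbd : ∀ᵐ t ∂(volume.restrict (Icc 0 c)),
      ‖Q t * (P1 t - P2 t)‖ ≤ C * ‖P1 t - P2 t‖ := by
    filter_upwards [hQbd] with t ht
    calc ‖Q t * (P1 t - P2 t)‖ ≤ ‖Q t‖ * ‖P1 t - P2 t‖ := norm_mul_le _ _
      _ ≤ C * ‖P1 t - P2 t‖ := mul_le_mul_of_nonneg_right ht (norm_nonneg _)
  intro x hx
  exact sub_eq_zero.mp (volterra_zero hC hwc hrint hw hbd x hx)

/-- Solutions of Volterra equations with skew-Hermitian kernel are unitary. -/
lemma volterra_unitary {c C : ℝ} (hC : 0 ≤ C) {Q P : ℝ → 𝕄}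
    (hQ : IntegrableOn Q (Icc 0 c))
    (hQbd : ∀ᵐ t ∂(volume.restrict (Icc 0 c)), ‖Q t‖ ≤ C)
    (hQskew : ∀ᵐ t ∂(volume.restrict (Icc 0 c)), (Q t)ᴴ = -Q t)
    (hPc : ContinuousOn P (Icc 0 c))
    (hP : ∀ x ∈ Icc (0:ℝ) c, P x = 1 + ∫ t in Ioc (0:ℝ) x, Q t * P t) :
    ∀ x ∈ Icc (0:ℝ) c, P x * (P x)ᴴ = 1 := by
  have hQP : IntegrableOn (fun t => Q t * P t) (Icc 0 c) := integrableOn_mul_cont hQ hPc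
  have hPH : ContinuousOn (fun t => (P t)ᴴ) (Icc 0 c) := cont_conjTranspose hPc
  have hPHv := conj_volterra hQP hP
  have hQH : IntegrableOn (fun t => (Q t)ᴴ) (Icc 0 c) := (ctL m).integrable_comp hQ
  have hvint : IntegrableOn (fun t => (P t)ᴴ * (Q t)ᴴ) (Icc 0 c) :=
    integrableOn_cont_mul hQH hPH
  set w : ℝ → 𝕄 := fun t => P t * (P t)ᴴ - 1 with hwdef
  have hwc : ContinuousOn w (Icc 0 c) := (hPc.mul hPH).sub continuousOn_const
  set r : ℝ → 𝕄 := fun t => Q t * w t - w t * Q t with hrdef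
  have hrint : IntegrableOn r (Icc 0 c) :=
    (integrableOn_mul_cont hQ hwc).sub (integrableOn_cont_mul hQ hwc)
  have hw : ∀ x ∈ Icc (0:ℝ) c, w x = ∫ t in Ioc (0:ℝ) x, r t := by
    intro x hx
    have hsub : Ioc (0:ℝ) x ⊆ Icc 0 c := fun t ht => ⟨ht.1.le, ht.2.trans hx.2⟩
    have hmx := volterra_mul (a := (1:𝕄)) (b := (1:𝕄)) hQP hvint hP hPHv hx
    have h1 : w x = ∫ t in Ioc (0:ℝ) x,
        ((Q t * P t) * (P t)ᴴ + P t * ((P t)ᴴ * (Q t)ᴴ)) := by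
      rw [hwdef]
      simp only []
      rw [hmx, one_mul, add_sub_cancel_left]
    rw [h1]
    refine integral_congr_ae ?_
    filter_upwards [ae_restrict_of_ae_restrict_of_subset hsub hQskew] with t ht
    rw [ht, hrdef, hwdef]
    simp only []
    noncomm_ring
  have hbd : ∀ᵐ t ∂(volume.restrict (Icc 0 c)), ‖r t‖ ≤ (2 * C) * ‖w t‖ := by
    filter_upwards [hQbd] with t ht
    have h1 : ‖r t‖ ≤ ‖Q t * w t‖ + ‖w t * Q t‖ := norm_sub_le _ _
    have h2 : ‖Q t * w t‖ ≤ ‖Q t‖ * ‖w t‖ := norm_mul_le _ _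
    have h3 : ‖w t * Q t‖ ≤ ‖w t‖ * ‖Q t‖ := norm_mul_le _ _
    have h4 : ‖Q t‖ * ‖w t‖ ≤ C * ‖w t‖ := mul_le_mul_of_nonneg_right ht (norm_nonneg _)
    have h5 : ‖w t‖ * ‖Q t‖ ≤ ‖w t‖ * C := mul_le_mul_of_nonneg_left ht (norm_nonneg _)
    nlinarith [norm_nonneg (w t)]
  intro x hx
  have := volterra_zero (by linarith : (0:ℝ) ≤ 2 * C) hwc hrint hw hbd x hx
  rw [hwdef] at this
  simp only [] at this
  exact sub_eq_zero.mp this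

end MatrixPart

end OmegaAux

end OmegaHelpers

open OmegaAux

set_option maxHeartbeats 1600000 in
/-- If `Q₁, Q̃₁` are integrable, anti-Hermitian a.e., bounded by `C₀` in the
operator norm a.e., and coincide a.e. on `[0,δ]`, and `P₊, P₋, P̃₊, P̃₋` are the corresponding
absolutely continuous solutions of `P±' = ±Q₁P±`, `P̃±' = ±Q̃₁P̃±` with value `I` at `0`
(encoded by integral equations), then `Ω(x) := ½(P₋(x)P̃₋(x)ᴴ + P₊(x)P̃₊(x)ᴴ)` equals `I`
on `[0,δ]` and `‖Ω(x) - I‖ ≤ 2C₀(x - δ)` on `[δ,π]` (operator norm). -/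
theorem omega_close_to_id (m : ℕ) (hm : 1 ≤ m) (C₀ δ : ℝ)
    (hC₀ : 0 < C₀) (hδ0 : 0 ≤ δ) (hδπ : δ ≤ Real.pi)
    (Q1 Qt1 : ℝ → Matrix (Fin m) (Fin m) ℂ)
    (hQ1int : IntegrableOn Q1 (Icc 0 Real.pi))
    (hQt1int : IntegrableOn Qt1 (Icc 0 Real.pi))
    (hQ1skew : ∀ᵐ x ∂(volume.restrict (Icc 0 Real.pi)), (Q1 x)ᴴ = -Q1 x)
    (hQt1skew : ∀ᵐ x ∂(volume.restrict (Icc 0 Real.pi)), (Qt1 x)ᴴ = -Qt1 x)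
    (hQ1bd : ∀ᵐ x ∂(volume.restrict (Icc 0 Real.pi)), ‖Q1 x‖ ≤ C₀)
    (hQt1bd : ∀ᵐ x ∂(volume.restrict (Icc 0 Real.pi)), ‖Qt1 x‖ ≤ C₀)
    (heq : ∀ᵐ x ∂(volume.restrict (Icc 0 δ)), Q1 x = Qt1 x)
    (Pp Pm Ptp Ptm : ℝ → Matrix (Fin m) (Fin m) ℂ)
    (hPpc : ContinuousOn Pp (Icc 0 Real.pi)) (hPp0 : Pp 0 = 1)
    (hPp : ∀ x ∈ Icc 0 Real.pi, Pp x = 1 + ∫ t in (0:ℝ)..x, Q1 t * Pp t)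
    (hPmc : ContinuousOn Pm (Icc 0 Real.pi)) (hPm0 : Pm 0 = 1)
    (hPm : ∀ x ∈ Icc 0 Real.pi, Pm x = 1 - ∫ t in (0:ℝ)..x, Q1 t * Pm t)
    (hPtpc : ContinuousOn Ptp (Icc 0 Real.pi)) (hPtp0 : Ptp 0 = 1)
    (hPtp : ∀ x ∈ Icc 0 Real.pi, Ptp x = 1 + ∫ t in (0:ℝ)..x, Qt1 t * Ptp t)
    (hPtmc : ContinuousOn Ptm (Icc 0 Real.pi)) (hPtm0 : Ptm 0 = 1)
    (hPtm : ∀ x ∈ Icc 0 Real.pi, Ptm x = 1 - ∫ t in (0:ℝ)..x, Qt1 t * Ptm t)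
    (Ω : ℝ → Matrix (Fin m) (Fin m) ℂ)
    (hΩ : ∀ x, Ω x = ((1:ℂ)/2) • (Pm x * (Ptm x)ᴴ + Pp x * (Ptp x)ᴴ)) :
    (∀ x ∈ Icc 0 δ, Ω x = 1) ∧
    (∀ x ∈ Icc δ Real.pi, ‖Ω x - 1‖ ≤ 2 * C₀ * (x - δ)) := by
  classical
  haveI : NeZero m := ⟨Nat.one_le_iff_ne_zero.mp hm⟩
  have hπ0 : (0:ℝ) ≤ Real.pi := Real.pi_pos.le
  have hsubδ : Icc (0:ℝ) δ ⊆ Icc 0 Real.pi := Icc_subset_Icc le_rfl hδπ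
  have hsubx : ∀ x ∈ Icc (0:ℝ) Real.pi, Ioc (0:ℝ) x ⊆ Icc 0 Real.pi :=
    fun x hx t ht => ⟨ht.1.le, ht.2.trans hx.2⟩
  -- normalized integral equations
  have hPp' : ∀ x ∈ Icc (0:ℝ) Real.pi, Pp x = 1 + ∫ t in Ioc (0:ℝ) x, Q1 t * Pp t := by
    intro x hx; rw [hPp x hx, intervalIntegral.integral_of_le hx.1]
  have hPtp' : ∀ x ∈ Icc (0:ℝ) Real.pi, Ptp x = 1 + ∫ t in Ioc (0:ℝ) x, Qt1 t * Ptp t := by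
    intro x hx; rw [hPtp x hx, intervalIntegral.integral_of_le hx.1]
  have hPm' : ∀ x ∈ Icc (0:ℝ) Real.pi, Pm x = 1 + ∫ t in Ioc (0:ℝ) x, (-Q1 t) * Pm t := by
    intro x hx
    rw [hPm x hx, intervalIntegral.integral_of_le hx.1, sub_eq_add_neg, ← integral_neg]
    simp only [neg_mul]
  have hPtm' : ∀ x ∈ Icc (0:ℝ) Real.pi, Ptm x = 1 + ∫ t in Ioc (0:ℝ) x, (-Qt1 t) * Ptm t := by
    intro x hx
    rw [hPtm x hx, intervalIntegral.integral_of_le hx.1, sub_eq_add_neg, ← integral_neg]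
    simp only [neg_mul]
  -- data for the negated kernels
  have hQ1int' : IntegrableOn (fun t => -Q1 t) (Icc 0 Real.pi) := hQ1int.neg
  have hQt1int' : IntegrableOn (fun t => -Qt1 t) (Icc 0 Real.pi) := hQt1int.neg
  have hQ1bd' : ∀ᵐ t ∂(volume.restrict (Icc 0 Real.pi)), ‖-Q1 t‖ ≤ C₀ := by
    filter_upwards [hQ1bd] with t ht; simpa using ht
  have hQt1bd' : ∀ᵐ t ∂(volume.restrict (Icc 0 Real.pi)), ‖-Qt1 t‖ ≤ C₀ := by
    filter_upwards [hQt1bd] with t ht; simpa using ht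
  have hQ1skew' : ∀ᵐ t ∂(volume.restrict (Icc 0 Real.pi)), (-Q1 t)ᴴ = -(-Q1 t) := by
    filter_upwards [hQ1skew] with t ht; rw [conjTranspose_neg, ht]
  have hQt1skew' : ∀ᵐ t ∂(volume.restrict (Icc 0 Real.pi)), (-Qt1 t)ᴴ = -(-Qt1 t) := by
    filter_upwards [hQt1skew] with t ht; rw [conjTranspose_neg, ht]
  -- unitarity
  have hUp := volterra_unitary hC₀.le hQ1int hQ1bd hQ1skew hPpc hPp'
  have hUm := volterra_unitary hC₀.le hQ1int' hQ1bd' hQ1skew' hPmc hPm'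
  have hUtp := volterra_unitary hC₀.le hQt1int hQt1bd hQt1skew hPtpc hPtp'
  have hUtm := volterra_unitary hC₀.le hQt1int' hQt1bd' hQt1skew' hPtmc hPtm'
  -- unitary matrices have norm one
  have hnorm : ∀ (A : Matrix (Fin m) (Fin m) ℂ), A * Aᴴ = 1 → ‖A‖ = 1 ∧ ‖Aᴴ‖ = 1 := by
    intro A hA
    have h1 : star Aᴴ * Aᴴ = 1 := by
      rw [star_eq_conjTranspose, conjTranspose_conjTranspose]; exact hA
    have h2 : ‖Aᴴ‖ * ‖Aᴴ‖ = 1 := by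
      rw [← CStarRing.norm_star_mul_self, h1, CStarRing.norm_one]
    have h3 : ‖Aᴴ‖ = 1 := by
      rcases mul_self_eq_one_iff.mp h2 with h | h
      · exact h
      · nlinarith [norm_nonneg Aᴴ]
    refine ⟨?_, h3⟩
    rw [← Matrix.l2_opNorm_conjTranspose]
    exact h3
  have half2 : ((1:ℂ)/2) • ((1:Matrix (Fin m) (Fin m) ℂ) + 1) = 1 := by
    rw [← two_smul ℂ (1:Matrix (Fin m) (Fin m) ℂ), smul_smul]
    norm_num
  -- Part 1 : equality on [0, δ]
  have heqIoc : ∀ x ∈ Icc (0:ℝ) δ, ∀ᵐ t ∂(volume.restrict (Ioc (0:ℝ) x)), Q1 t = Qt1 t :=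
    fun x hx => ae_restrict_of_ae_restrict_of_subset
      (show Ioc (0:ℝ) x ⊆ Icc 0 δ from fun t ht => ⟨ht.1.le, ht.2.trans hx.2⟩) heq
  have hPtpδ : ∀ x ∈ Icc (0:ℝ) δ, Ptp x = 1 + ∫ t in Ioc (0:ℝ) x, Q1 t * Ptp t := by
    intro x hx
    rw [hPtp' x (hsubδ hx)]
    congr 1
    refine integral_congr_ae ?_
    filter_upwards [heqIoc x hx] with t ht
    rw [ht]
  have hPtmδ : ∀ x ∈ Icc (0:ℝ) δ, Ptm x = 1 + ∫ t in Ioc (0:ℝ) x, (-Q1 t) * Ptm t := by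
    intro x hx
    rw [hPtm' x (hsubδ hx)]
    congr 1
    refine integral_congr_ae ?_
    filter_upwards [heqIoc x hx] with t ht
    rw [ht]
  have hQ1bdδ := ae_restrict_of_ae_restrict_of_subset hsubδ hQ1bd
  have hQ1bdδ' : ∀ᵐ t ∂(volume.restrict (Icc 0 δ)), ‖-Q1 t‖ ≤ C₀ :=
    ae_restrict_of_ae_restrict_of_subset hsubδ hQ1bd'
  have hEp := volterra_unique hC₀.le (hQ1int.mono_set hsubδ) hQ1bdδ
    (hPpc.mono hsubδ) (hPtpc.mono hsubδ)
    (fun x hx => hPp' x (hsubδ hx)) hPtpδ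
  have hEm := volterra_unique hC₀.le (hQ1int'.mono_set hsubδ) hQ1bdδ'
    (hPmc.mono hsubδ) (hPtmc.mono hsubδ)
    (fun x hx => hPm' x (hsubδ hx)) hPtmδ
  have part1 : ∀ x ∈ Icc (0:ℝ) δ, Ω x = 1 := by
    intro x hx
    rw [hΩ x, ← hEm x hx, ← hEp x hx, hUm x (hsubδ hx), hUp x (hsubδ hx)]
    exact half2
  refine ⟨part1, ?_⟩
  -- Part 2 : the bound on [δ, π]
  have hPHtmc : ContinuousOn (fun t => (Ptm t)ᴴ) (Icc 0 Real.pi) := cont_conjTranspose hPtmc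
  have hPHtpc : ContinuousOn (fun t => (Ptp t)ᴴ) (Icc 0 Real.pi) := cont_conjTranspose hPtpc
  set A : ℝ → Matrix (Fin m) (Fin m) ℂ := fun t => Pm t * (Ptm t)ᴴ with hAdef
  set B : ℝ → Matrix (Fin m) (Fin m) ℂ := fun t => Pp t * (Ptp t)ᴴ with hBdef
  have hAc : ContinuousOn A (Icc 0 Real.pi) := hPmc.mul hPHtmc
  have hBc : ContinuousOn B (Icc 0 Real.pi) := hPpc.mul hPHtpc
  -- conjugate-transposed equations
  have hPHtm : ∀ x ∈ Icc (0:ℝ) Real.pi,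
      (Ptm x)ᴴ = 1 + ∫ t in Ioc (0:ℝ) x, (Ptm t)ᴴ * Qt1 t := by
    intro x hx
    rw [conj_volterra (integrableOn_mul_cont hQt1int' hPtmc) hPtm' x hx]
    congr 1
    refine integral_congr_ae ?_
    filter_upwards [ae_restrict_of_ae_restrict_of_subset (hsubx x hx) hQt1skew'] with t ht
    rw [ht, neg_neg]
  have hPHtp : ∀ x ∈ Icc (0:ℝ) Real.pi,
      (Ptp x)ᴴ = 1 + ∫ t in Ioc (0:ℝ) x, -((Ptp t)ᴴ * Qt1 t) := by
    intro x hx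
    rw [conj_volterra (integrableOn_mul_cont hQt1int hPtpc) hPtp' x hx]
    congr 1
    refine integral_congr_ae ?_
    filter_upwards [ae_restrict_of_ae_restrict_of_subset (hsubx x hx) hQt1skew] with t ht
    rw [ht, mul_neg]
  set rA : ℝ → Matrix (Fin m) (Fin m) ℂ := fun t => -(Q1 t * A t) + A t * Qt1 t with hrAdef
  set rB : ℝ → Matrix (Fin m) (Fin m) ℂ := fun t => Q1 t * B t - B t * Qt1 t with hrBdef
  have hAeq : ∀ x ∈ Icc (0:ℝ) Real.pi, A x = 1 + ∫ t in Ioc (0:ℝ) x, rA t := by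
    intro x hx
    have h := volterra_mul (a := (1:Matrix (Fin m) (Fin m) ℂ)) (b := (1:Matrix (Fin m) (Fin m) ℂ))
      (integrableOn_mul_cont hQ1int' hPmc)
      (integrableOn_cont_mul hQt1int hPHtmc) hPm' hPHtm hx
    rw [hAdef]
    simp only []
    rw [h, one_mul]
    congr 1
    refine setIntegral_congr_fun measurableSet_Ioc (fun s _ => ?_)
    rw [hrAdef, hAdef]
    simp only []
    noncomm_ring
  have hBeq : ∀ x ∈ Icc (0:ℝ) Real.pi, B x = 1 + ∫ t in Ioc (0:ℝ) x, rB t := by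
    intro x hx
    have hvB : IntegrableOn (fun t => -((Ptp t)ᴴ * Qt1 t)) (Icc 0 Real.pi) :=
      (integrableOn_cont_mul hQt1int hPHtpc).neg
    have h := volterra_mul (a := (1:Matrix (Fin m) (Fin m) ℂ)) (b := (1:Matrix (Fin m) (Fin m) ℂ))
      (integrableOn_mul_cont hQ1int hPpc) hvB hPp' hPHtp hx
    rw [hBdef]
    simp only []
    rw [h, one_mul]
    congr 1
    refine setIntegral_congr_fun measurableSet_Ioc (fun s _ => ?_)
    rw [hrBdef, hBdef]
    simp only []
    noncomm_ring
  have hrAint : IntegrableOn rA (Icc 0 Real.pi) :=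
    ((integrableOn_mul_cont hQ1int hAc).neg).add (integrableOn_cont_mul hQt1int hAc)
  have hrBint : IntegrableOn rB (Icc 0 Real.pi) :=
    (integrableOn_mul_cont hQ1int hBc).sub (integrableOn_cont_mul hQt1int hBc)
  set rΩ : ℝ → Matrix (Fin m) (Fin m) ℂ := fun t => ((1:ℂ)/2) • (rA t + rB t) with hrΩdef
  have hrΩint : IntegrableOn rΩ (Icc 0 Real.pi) := (hrAint.add hrBint).smul ((1:ℂ)/2)
  have hΩeq : ∀ x ∈ Icc (0:ℝ) Real.pi, Ω x = 1 + ∫ t in Ioc (0:ℝ) x, rΩ t := by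
    intro x hx
    calc Ω x = ((1:ℂ)/2) • ((1 + ∫ t in Ioc (0:ℝ) x, rA t) + (1 + ∫ t in Ioc (0:ℝ) x, rB t)) := by
          rw [hΩ x, ← hAeq x hx, ← hBeq x hx]
      _ = ((1:ℂ)/2) • (((1:Matrix (Fin m) (Fin m) ℂ) + 1)
            + ((∫ t in Ioc (0:ℝ) x, rA t) + ∫ t in Ioc (0:ℝ) x, rB t)) := by
          rw [add_add_add_comm]
      _ = ((1:ℂ)/2) • ((1:Matrix (Fin m) (Fin m) ℂ) + 1)
            + ((1:ℂ)/2) • ∫ t in Ioc (0:ℝ) x, (rA t + rB t) := by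
          rw [smul_add,
            integral_add (hrAint.mono_set (hsubx x hx)) (hrBint.mono_set (hsubx x hx))]
      _ = 1 + ∫ t in Ioc (0:ℝ) x, rΩ t := by
          rw [half2, ← integral_smul]
  have hhalfnorm : ‖((1:ℂ)/2)‖ = 1/2 := by norm_num
  have hrΩbd : ∀ᵐ t ∂(volume.restrict (Icc 0 Real.pi)), ‖rΩ t‖ ≤ 2 * C₀ := by
    filter_upwards [hQ1bd, hQt1bd, ae_restrict_mem measurableSet_Icc] with t h1 h2 ht
    have hAn : ‖A t‖ ≤ 1 := by
      refine le_trans (Matrix.l2_opNorm_mul _ _) ?_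
      rw [(hnorm _ (hUm t ht)).1, (hnorm _ (hUtm t ht)).2, mul_one]
    have hBn : ‖B t‖ ≤ 1 := by
      refine le_trans (Matrix.l2_opNorm_mul _ _) ?_
      rw [(hnorm _ (hUp t ht)).1, (hnorm _ (hUtp t ht)).2, mul_one]
    have hrAn : ‖rA t‖ ≤ 2 * C₀ := by
      calc ‖rA t‖ ≤ ‖Q1 t * A t‖ + ‖A t * Qt1 t‖ := by
            rw [hrAdef]
            simp only []
            exact le_trans (norm_add_le _ _) (by rw [norm_neg])
        _ ≤ ‖Q1 t‖ * ‖A t‖ + ‖A t‖ * ‖Qt1 t‖ :=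
            add_le_add (Matrix.l2_opNorm_mul _ _) (Matrix.l2_opNorm_mul _ _)
        _ ≤ C₀ * 1 + 1 * C₀ :=
            add_le_add (mul_le_mul h1 hAn (norm_nonneg _) hC₀.le)
              (mul_le_mul hAn h2 (norm_nonneg _) zero_le_one)
        _ = 2 * C₀ := by ring
    have hrBn : ‖rB t‖ ≤ 2 * C₀ := by
      calc ‖rB t‖ ≤ ‖Q1 t * B t‖ + ‖B t * Qt1 t‖ := norm_sub_le _ _
        _ ≤ ‖Q1 t‖ * ‖B t‖ + ‖B t‖ * ‖Qt1 t‖ :=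
            add_le_add (Matrix.l2_opNorm_mul _ _) (Matrix.l2_opNorm_mul _ _)
        _ ≤ C₀ * 1 + 1 * C₀ :=
            add_le_add (mul_le_mul h1 hBn (norm_nonneg _) hC₀.le)
              (mul_le_mul hBn h2 (norm_nonneg _) zero_le_one)
        _ = 2 * C₀ := by ring
    calc ‖rΩ t‖ = ‖((1:ℂ)/2)‖ * ‖rA t + rB t‖ := norm_smul _ _
      _ ≤ (1/2) * (‖rA t‖ + ‖rB t‖) := by
          rw [hhalfnorm]
          exact mul_le_mul_of_nonneg_left (norm_add_le _ _) (by norm_num)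
      _ ≤ 2 * C₀ := by linarith
  intro x hx
  have hx' : x ∈ Icc (0:ℝ) Real.pi := ⟨le_trans hδ0 hx.1, hx.2⟩
  have hδ' : δ ∈ Icc (0:ℝ) Real.pi := ⟨hδ0, hδπ⟩
  have hsδx : Ioc δ x ⊆ Icc (0:ℝ) Real.pi :=
    fun t ht => ⟨le_trans hδ0 ht.1.le, ht.2.trans hx.2⟩
  have hzero : (∫ t in Ioc (0:ℝ) δ, rΩ t) = 0 := by
    have h1 := hΩeq δ hδ'
    rw [part1 δ ⟨hδ0, le_rfl⟩] at h1
    exact (left_eq_add.mp h1)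
  have hsplit : Ω x - 1 = ∫ t in Ioc δ x, rΩ t := by
    rw [hΩeq x hx', ← Ioc_union_Ioc_eq_Ioc hδ0 hx.1,
      setIntegral_union (Ioc_disjoint_Ioc_of_le le_rfl) measurableSet_Ioc
        (hrΩint.mono_set (hsubx δ hδ')) (hrΩint.mono_set hsδx), hzero]
    abel
  rw [hsplit]
  calc ‖∫ t in Ioc δ x, rΩ t‖ ≤ ∫ t in Ioc δ x, ‖rΩ t‖ := norm_integral_le_integral_norm _
    _ ≤ ∫ _t in Ioc δ x, (2 * C₀) := by
        refine integral_mono_ae ((hrΩint.mono_set hsδx).norm)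
          (integrableOn_const measure_Ioc_lt_top.ne) ?_
        exact ae_restrict_of_ae_restrict_of_subset hsδx hrΩbd
    _ = 2 * C₀ * (x - δ) := by
        rw [setIntegral_const, Real.volume_real_Ioc_of_le hx.1,
          smul_eq_mul]
        ring
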